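/- In the WL_MMILP/GNN correspondence, color-equality implies feature-equality propagates through layers: if for layer l−1, equal WL colors of vertices (within or across two graphs, in the same vertex group) imply equal GNN hidden features, and the layer-l update functions are as specified, then equal WL colors at layer l also imply equal GNN hidden features at layer l. -/
import Mathlib


open Finset
open scoped Classical

/-- The pair of (constraint-vertex, variable-vertex) color spaces of the canonical
WL_MMILP color refinement at each iteration: an iteration-`l+1` color consists of the
iteration-`l` color together with, for each (variable or constraint) group, the function
assigning to each iteration-`l` color of that group the total incident edge weight
carried into that color class. -/
def MCol (p d : ℕ) : ℕ → Type × Type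
  | 0 => ((Fin d → ℝ), (Fin d → ℝ))
  | l + 1 =>
      ((MCol p d l).1 × (Fin (p + 1) → (MCol p d l).2 → ℝ),
       (MCol p d l).2 × ((MCol p d l).1 → ℝ))

/-- An MMILP-graph with `p+1` variable groups `W_0,…,W_p` of sizes `n k`, `m` constraint
vertices, vertex features in `ℝ^d`, and real edge weights joining variable vertices with
constraint vertices only. -/
structure MMILPGraph (p m d : ℕ) (n : Fin (p + 1) → ℕ) where
  E : (k : Fin (p + 1)) → Fin (n k) → Fin m → ℝ
  hW : (k : Fin (p + 1)) → Fin (n k) → Fin d → ℝ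
  hV : Fin m → Fin d → ℝ

variable {p m d : ℕ} {n : Fin (p + 1) → ℕ}

/-- The WL_MMILP color refinement with canonical (perfectly injective) hash functions:
component `.1` gives the constraint-vertex colors, component `.2` the variable-vertex
colors of each group `W_k`. -/
noncomputable def wl (G : MMILPGraph p m d n) :
    (l : ℕ) → (Fin m → (MCol p d l).1) × ((k : Fin (p + 1)) → Fin (n k) → (MCol p d l).2)
  | 0 => (fun i => G.hV i, fun k j => G.hW k j)
  | l + 1 =>
      (fun i => ((wl G l).1 i,
          fun k c => ∑ j : Fin (n k), if (wl G l).2 k j = c then G.E k j i else 0),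
       fun k j => ((wl G l).2 k j,
          fun c => ∑ i : Fin m, if (wl G l).1 i = c then G.E k j i else 0))

/-- The WL_MMILP test cannot distinguish the two graphs after `L` iterations:
the multisets of final colors of every vertex group coincide. -/
def WLIndist (G Ghat : MMILPGraph p m d n) (L : ℕ) : Prop :=
  (Multiset.map (wl G L).1 Finset.univ.val = Multiset.map (wl Ghat L).1 Finset.univ.val) ∧
  ∀ k : Fin (p + 1),
    Multiset.map ((wl G L).2 k) Finset.univ.val =
      Multiset.map ((wl Ghat L).2 k) Finset.univ.val

/-- The class `F` of multipartite GNNs: per-group input encoders, `L` rounds of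
variable–constraint message passing with edge-weighted sum aggregation, and a readout on
the interdiction-variable group `W_0`. -/
structure MGNN (p d : ℕ) where
  L : ℕ
  e : ℕ
  encV : (Fin d → ℝ) → (Fin e → ℝ)
  encW : Fin (p + 1) → (Fin d → ℝ) → (Fin e → ℝ)
  fW : ℕ → Fin (p + 1) → (Fin e → ℝ) → (Fin e → ℝ)
  fV : ℕ → Fin (p + 1) → (Fin e → ℝ) → (Fin e → ℝ)
  gV : ℕ → (Fin e → ℝ) → (Fin e → ℝ) → (Fin e → ℝ)
  gW : ℕ → Fin (p + 1) → (Fin e → ℝ) → (Fin e → ℝ) → (Fin e → ℝ)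
  gout : (Fin e → ℝ) → ℝ

/-- Hidden features of the GNN on an MMILP-graph: `.1` for constraint vertices,
`.2` for variable vertices of each group. -/
noncomputable def MGNN.hid (N : MGNN p d) (G : MMILPGraph p m d n) :
    ℕ → (Fin m → Fin N.e → ℝ) × ((k : Fin (p + 1)) → Fin (n k) → Fin N.e → ℝ)
  | 0 => (fun i => N.encV (G.hV i), fun k j => N.encW k (G.hW k j))
  | l + 1 =>
      (fun i => N.gV l ((N.hid G l).1 i)
          (∑ k : Fin (p + 1), ∑ j : Fin (n k), G.E k j i • N.fW l k ((N.hid G l).2 k j)),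
       fun k j => N.gW l k ((N.hid G l).2 k j)
          (∑ i : Fin m, G.E k j i • N.fV l k ((N.hid G l).1 i)))

/-- The output of the GNN: readout applied to the final embeddings of the
interdiction-variable vertices `W_0`, one real value per `W_0` vertex. -/
noncomputable def MGNN.out (N : MGNN p d) (G : MMILPGraph p m d n) : Fin (n 0) → ℝ :=
  fun j => N.gout ((N.hid G N.L).2 0 j)

lemma aux_sum {ι C : Type*} [Fintype ι] {e : ℕ}
    (col₁ col₂ : ι → C) (w₁ w₂ : ι → ℝ) (v₁ v₂ : ι → Fin e → ℝ)
    (h11 : ∀ i i', col₁ i = col₁ i' → v₁ i = v₁ i')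
    (h12 : ∀ i i', col₁ i = col₂ i' → v₁ i = v₂ i')
    (h22 : ∀ i i', col₂ i = col₂ i' → v₂ i = v₂ i')
    (hS : ∀ c, (∑ i, if col₁ i = c then w₁ i else 0) = ∑ i, if col₂ i = c then w₂ i else 0) :
    ∑ i, w₁ i • v₁ i = ∑ i, w₂ i • v₂ i := by
  classical
  set u : C → (Fin e → ℝ) := fun c =>
    if h : ∃ i, col₁ i = c then v₁ h.choose
    else if h : ∃ i, col₂ i = c then v₂ h.choose else 0 with hudef
  have hu1 : ∀ i, u (col₁ i) = v₁ i := by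
    intro i
    have hex : ∃ i', col₁ i' = col₁ i := ⟨i, rfl⟩
    simp only [hudef, dif_pos hex]
    exact h11 _ _ hex.choose_spec
  have hu2 : ∀ i, u (col₂ i) = v₂ i := by
    intro i
    by_cases hex : ∃ i', col₁ i' = col₂ i
    · simp only [hudef, dif_pos hex]
      exact h12 _ _ hex.choose_spec
    · have hex2 : ∃ i', col₂ i' = col₂ i := ⟨i, rfl⟩
      simp only [hudef, dif_neg hex, dif_pos hex2]
      exact h22 _ _ hex2.choose_spec
  set T : Finset C := Finset.univ.image col₁ ∪ Finset.univ.image col₂ with hT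
  have key : ∀ (col : ι → C) (w : ι → ℝ) (v : ι → Fin e → ℝ),
      (∀ i, col i ∈ T) → (∀ i, u (col i) = v i) →
      ∑ i, w i • v i = ∑ c ∈ T, (∑ i, if col i = c then w i else 0) • u c := by
    intro col w v hmem hv
    calc ∑ i, w i • v i
        = ∑ i, ∑ c ∈ T, (if col i = c then w i else 0) • u c := by
          refine Finset.sum_congr rfl fun i _ => ?_
          simp only [ite_smul, zero_smul]
          rw [Finset.sum_ite_eq T (col i) fun c => w i • u c, if_pos (hmem i), hv i]
      _ = ∑ c ∈ T, ∑ i, (if col i = c then w i else 0) • u c := Finset.sum_comm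
      _ = ∑ c ∈ T, (∑ i, if col i = c then w i else 0) • u c := by
          simp [Finset.sum_smul]
  rw [key col₁ w₁ v₁ (fun i => by simp [hT]) hu1,
      key col₂ w₂ v₂ (fun i => by simp [hT]) hu2]
  exact Finset.sum_congr rfl fun c _ => by rw [hS c]

/-- The induction step of the WL→GNN direction: if at layer `l`,
equality of WL colors of two vertices of the same group — within either graph or across
the two graphs `Gr true`, `Gr false` — implies equality of their GNN hidden features,
then the same implication holds at layer `l + 1`. -/
theorem wl_color_eq_implies_feature_eq_step
    {p m d : ℕ} {n : Fin (p + 1) → ℕ} (Gr : Bool → MMILPGraph p m d n)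
    (N : MGNN p d) (l : ℕ)
    (ihV : ∀ (a b : Bool) (i i' : Fin m),
      (wl (Gr a) l).1 i = (wl (Gr b) l).1 i' →
        (N.hid (Gr a) l).1 i = (N.hid (Gr b) l).1 i')
    (ihW : ∀ (a b : Bool) (k : Fin (p + 1)) (j j' : Fin (n k)),
      (wl (Gr a) l).2 k j = (wl (Gr b) l).2 k j' →
        (N.hid (Gr a) l).2 k j = (N.hid (Gr b) l).2 k j') :
    (∀ (a b : Bool) (i i' : Fin m),
      (wl (Gr a) (l + 1)).1 i = (wl (Gr b) (l + 1)).1 i' →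
        (N.hid (Gr a) (l + 1)).1 i = (N.hid (Gr b) (l + 1)).1 i') ∧
    (∀ (a b : Bool) (k : Fin (p + 1)) (j j' : Fin (n k)),
      (wl (Gr a) (l + 1)).2 k j = (wl (Gr b) (l + 1)).2 k j' →
        (N.hid (Gr a) (l + 1)).2 k j = (N.hid (Gr b) (l + 1)).2 k j') := by
  constructor
  · intro a b i i' h
    simp only [wl] at h
    have h1 : (wl (Gr a) l).1 i = (wl (Gr b) l).1 i' := congrArg Prod.fst h
    have h2 : (fun k c => ∑ j : Fin (n k), if (wl (Gr a) l).2 k j = c then (Gr a).E k j i else 0)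
        = (fun k c => ∑ j : Fin (n k), if (wl (Gr b) l).2 k j = c then (Gr b).E k j i' else 0) :=
      congrArg Prod.snd h
    simp only [MGNN.hid]
    rw [ihV a b i i' h1]
    refine congrArg _ ?_
    rw [Finset.sum_sigma' Finset.univ (fun k => (Finset.univ : Finset (Fin (n k))))
        (fun k j => (Gr a).E k j i • N.fW l k ((N.hid (Gr a) l).2 k j)),
      Finset.sum_sigma' Finset.univ (fun k => (Finset.univ : Finset (Fin (n k))))
        (fun k j => (Gr b).E k j i' • N.fW l k ((N.hid (Gr b) l).2 k j)),
      Finset.univ_sigma_univ]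
    refine aux_sum (ι := Σ k : Fin (p + 1), Fin (n k)) (C := Fin (p + 1) × (MCol p d l).2)
      (fun s => (s.1, (wl (Gr a) l).2 s.1 s.2)) (fun s => (s.1, (wl (Gr b) l).2 s.1 s.2))
      (fun s => (Gr a).E s.1 s.2 i) (fun s => (Gr b).E s.1 s.2 i')
      (fun s => N.fW l s.1 ((N.hid (Gr a) l).2 s.1 s.2))
      (fun s => N.fW l s.1 ((N.hid (Gr b) l).2 s.1 s.2))
      ?_ ?_ ?_ ?_
    · rintro ⟨k, j⟩ ⟨k', j'⟩ hc
      simp only [Prod.mk.injEq] at hc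
      obtain ⟨rfl, hc2⟩ := hc
      exact congrArg (N.fW l k) (ihW a a k j j' hc2)
    · rintro ⟨k, j⟩ ⟨k', j'⟩ hc
      simp only [Prod.mk.injEq] at hc
      obtain ⟨rfl, hc2⟩ := hc
      exact congrArg (N.fW l k) (ihW a b k j j' hc2)
    · rintro ⟨k, j⟩ ⟨k', j'⟩ hc
      simp only [Prod.mk.injEq] at hc
      obtain ⟨rfl, hc2⟩ := hc
      exact congrArg (N.fW l k) (ihW b b k j j' hc2)
    · rintro ⟨k0, c0⟩
      have hfix : ∀ (x : Bool) (i0 : Fin m),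
          (∑ s : Σ k : Fin (p + 1), Fin (n k),
            if ((s.1, (wl (Gr x) l).2 s.1 s.2) : Fin (p + 1) × (MCol p d l).2) = (k0, c0)
            then (Gr x).E s.1 s.2 i0 else 0) =
          ∑ j : Fin (n k0), if (wl (Gr x) l).2 k0 j = c0 then (Gr x).E k0 j i0 else 0 := by
        intro x i0
        rw [← Finset.univ_sigma_univ, Finset.sum_sigma]
        have : ∀ k : Fin (p + 1), (∑ j : Fin (n k),
            if ((k, (wl (Gr x) l).2 k j) : Fin (p + 1) × (MCol p d l).2) = (k0, c0)
            then (Gr x).E k j i0 else 0) =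
            if k = k0 then (∑ j : Fin (n k),
              if (wl (Gr x) l).2 k j = c0 then (Gr x).E k j i0 else 0) else 0 := by
          intro k
          by_cases hk : k = k0
          · subst hk
            simp [Prod.mk.injEq]
          · simp [Prod.mk.injEq, hk]
        rw [Finset.sum_congr rfl fun k _ => this k,
          Finset.sum_ite_eq' Finset.univ k0 (fun k => ∑ j : Fin (n k),
            if (wl (Gr x) l).2 k j = c0 then (Gr x).E k j i0 else 0)]
        simp
      convert (hfix a i).trans ((congrFun (congrFun h2 k0) c0).trans (hfix b i').symm) using 2 <;> congr 1
  · intro a b k j j' h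
    simp only [wl] at h
    have h1 : (wl (Gr a) l).2 k j = (wl (Gr b) l).2 k j' := congrArg Prod.fst h
    have h2 : (fun c => ∑ i : Fin m, if (wl (Gr a) l).1 i = c then (Gr a).E k j i else 0)
        = (fun c => ∑ i : Fin m, if (wl (Gr b) l).1 i = c then (Gr b).E k j' i else 0) :=
      congrArg Prod.snd h
    simp only [MGNN.hid]
    rw [ihW a b k j j' h1]
    refine congrArg _ ?_
    refine aux_sum (C := (MCol p d l).1)
      (fun i => (wl (Gr a) l).1 i) (fun i => (wl (Gr b) l).1 i)
      (fun i => (Gr a).E k j i) (fun i => (Gr b).E k j' i)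
      (fun i => N.fV l k ((N.hid (Gr a) l).1 i))
      (fun i => N.fV l k ((N.hid (Gr b) l).1 i))
      (fun i i' hc => congrArg (N.fV l k) (ihV a a i i' hc))
      (fun i i' hc => congrArg (N.fV l k) (ihV a b i i' hc))
      (fun i i' hc => congrArg (N.fV l k) (ihV b b i i' hc))
      (fun c => by
        have := congrFun h2 c
        simpa using this)
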